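/- The infimum over f in the RKHS of L(f) = max_{p ∈ Δ_n} ⟨−Y f̃(X), p⟩ + (1/2)‖f‖²_K equals −ρ_K²/2 when the margin ρ_K is positive, and the infimum is attained at f = ρ_K f* where f* is any unit-norm max-margin function. -/

import Mathlib

open scoped RealInnerProductSpace

section aux
variable {n : ℕ} [NeZero n]

lemma fin_exists_min (a : Fin n → ℝ) :
    ∃ i0, (⨅ i, a i) = a i0 ∧ ∀ j, a i0 ≤ a j := by
  obtain ⟨i0, hi0⟩ := Finite.exists_min a
  exact ⟨i0, le_antisymm (ciInf_le (Set.finite_range a).bddBelow i0) (le_ciInf hi0), hi0⟩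

lemma fin_exists_max (a : Fin n → ℝ) :
    ∃ i0, (⨆ i, a i) = a i0 ∧ ∀ j, a j ≤ a i0 := by
  obtain ⟨i0, hi0⟩ := Finite.exists_max a
  exact ⟨i0, le_antisymm (ciSup_le hi0) (le_ciSup (Set.finite_range a).bddAbove i0), hi0⟩

lemma sup_neg_eq (a : Fin n → ℝ) : (⨆ i, -a i) = -⨅ i, a i := by
  obtain ⟨i0, h1, h2⟩ := fin_exists_min a
  obtain ⟨j0, g1, g2⟩ := fin_exists_max (fun i => -a i)
  rw [h1, g1]
  have := h2 j0
  have := g2 i0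
  simp only [neg_le_neg_iff] at *
  linarith

lemma inf_mul_left (c : ℝ) (hc : 0 ≤ c) (a : Fin n → ℝ) :
    (⨅ i, c * a i) = c * ⨅ i, a i := by
  obtain ⟨i0, h1, h2⟩ := fin_exists_min a
  rw [h1]
  refine le_antisymm (ciInf_le (Set.finite_range _).bddBelow i0) (le_ciInf fun j => ?_)
  exact mul_le_mul_of_nonneg_left (h2 j) hc

lemma sup_simplex (a : Fin n → ℝ) :
    (⨆ p : stdSimplex ℝ (Fin n), ∑ i, (p : Fin n → ℝ) i * a i) = ⨆ i, a i := by
  have hne : Nonempty (stdSimplex ℝ (Fin n)) := ⟨⟨Pi.single 0 1, single_mem_stdSimplex ℝ 0⟩⟩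
  have hba : BddAbove (Set.range a) := (Set.finite_range a).bddAbove
  have hub : ∀ p : stdSimplex ℝ (Fin n), ∑ i, (p : Fin n → ℝ) i * a i ≤ ⨆ i, a i := by
    intro p
    obtain ⟨hp0, hp1⟩ := p.2
    calc ∑ i, (p : Fin n → ℝ) i * a i
        ≤ ∑ i, (p : Fin n → ℝ) i * (⨆ i, a i) :=
          Finset.sum_le_sum fun i _ =>
            mul_le_mul_of_nonneg_left (le_ciSup hba i) (hp0 i)
      _ = ⨆ i, a i := by rw [← Finset.sum_mul, (show (∑ i, (p : Fin n → ℝ) i) = 1 from hp1), one_mul]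
  refine le_antisymm (ciSup_le hub) (ciSup_le fun i => ?_)
  have hv : a i = ∑ j, (Pi.single i 1 : Fin n → ℝ) j * a j := by
    simp [Pi.single_apply]
  rw [hv]
  exact le_ciSup ⟨⨆ i, a i, Set.forall_mem_range.2 hub⟩
    (⟨Pi.single i 1, single_mem_stdSimplex ℝ i⟩ : stdSimplex ℝ (Fin n))

lemma inf_simplex (a : Fin n → ℝ) :
    (⨅ p : stdSimplex ℝ (Fin n), ∑ i, (p : Fin n → ℝ) i * a i) = ⨅ i, a i := by
  have hne : Nonempty (stdSimplex ℝ (Fin n)) := ⟨⟨Pi.single 0 1, single_mem_stdSimplex ℝ 0⟩⟩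
  have hbb : BddBelow (Set.range a) := (Set.finite_range a).bddBelow
  have hlb : ∀ p : stdSimplex ℝ (Fin n), (⨅ i, a i) ≤ ∑ i, (p : Fin n → ℝ) i * a i := by
    intro p
    obtain ⟨hp0, hp1⟩ := p.2
    calc (⨅ i, a i) = ∑ i, (p : Fin n → ℝ) i * (⨅ i, a i) := by
          rw [← Finset.sum_mul, (show (∑ i, (p : Fin n → ℝ) i) = 1 from hp1), one_mul]
      _ ≤ ∑ i, (p : Fin n → ℝ) i * a i :=
          Finset.sum_le_sum fun i _ =>
            mul_le_mul_of_nonneg_left (ciInf_le hbb i) (hp0 i)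
  refine le_antisymm (le_ciInf fun i => ?_) (le_ciInf hlb)
  have hv : a i = ∑ j, (Pi.single i 1 : Fin n → ℝ) j * a j := by
    simp [Pi.single_apply]
  rw [hv]
  exact ciInf_le ⟨⨅ i, a i, Set.forall_mem_range.2 hlb⟩
    (⟨Pi.single i 1, single_mem_stdSimplex ℝ i⟩ : stdSimplex ℝ (Fin n))

end aux

theorem stmt1 (n : ℕ) [NeZero n] {H : Type*} [NormedAddCommGroup H] [InnerProductSpace ℝ H]
    (v : Fin n → H) (hv : ∀ i, ‖v i‖ = 1)
    (L : H → ℝ)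
    (hL : ∀ f, L f =
      (⨆ p : stdSimplex ℝ (Fin n), ∑ i, (p : Fin n → ℝ) i * (-⟪f, v i⟫)) + ‖f‖ ^ 2 / 2)
    (ρ : ℝ)
    (hρ : ρ = ⨆ f : {f : H // ‖f‖ = 1},
      ⨅ p : stdSimplex ℝ (Fin n), ∑ i, (p : Fin n → ℝ) i * ⟪(f : H), v i⟫)
    (hpos : 0 < ρ)
    (fstar : H) (hfs : ‖fstar‖ = 1)
    (hmax : (⨅ p : stdSimplex ℝ (Fin n), ∑ i, (p : Fin n → ℝ) i * ⟪fstar, v i⟫) = ρ) :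
    (∀ f, -(ρ ^ 2) / 2 ≤ L f) ∧ L (ρ • fstar) = -(ρ ^ 2) / 2 := by
  -- rewrite L in terms of the pointwise infimum
  have hL' : ∀ f, L f = -(⨅ i, ⟪f, v i⟫) + ‖f‖ ^ 2 / 2 := by
    intro f
    rw [hL f, sup_simplex (fun i => -⟪f, v i⟫), sup_neg_eq]
  -- rewrite ρ
  have hρ' : ρ = ⨆ f : {f : H // ‖f‖ = 1}, ⨅ i, ⟪(f : H), v i⟫ := by
    rw [hρ]; congr 1; funext f; exact inf_simplex _
  -- boundedness of the sphere sup
  have hbdd : BddAbove (Set.range fun f : {f : H // ‖f‖ = 1} => ⨅ i, ⟪(f : H), v i⟫) := by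
    refine ⟨1, Set.forall_mem_range.2 fun f => ?_⟩
    calc (⨅ i, ⟪(f : H), v i⟫) ≤ ⟪(f : H), v 0⟫ :=
          ciInf_le (Set.finite_range _).bddBelow 0
      _ ≤ ‖(f : H)‖ * ‖v 0‖ := real_inner_le_norm _ _
      _ = 1 := by rw [f.2, hv 0, one_mul]
  -- key bound
  have key : ∀ f : H, (⨅ i, ⟪f, v i⟫) ≤ ρ * ‖f‖ := by
    intro f
    rcases eq_or_ne f 0 with rfl | hf
    · simp [inner_zero_left, ciInf_const]
    · have hnf : (0 : ℝ) < ‖f‖ := norm_pos_iff.2 hf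
      set g : H := ‖f‖⁻¹ • f with hg
      have hgn : ‖g‖ = 1 := by
        rw [hg, norm_smul, norm_inv, norm_norm, inv_mul_cancel₀ hnf.ne']
      have hfg : ∀ i, ⟪f, v i⟫ = ‖f‖ * ⟪g, v i⟫ := by
        intro i
        rw [hg, real_inner_smul_left]
        field_simp
      have h1 : (⨅ i, ⟪f, v i⟫) = ‖f‖ * ⨅ i, ⟪g, v i⟫ := by
        rw [← inf_mul_left _ hnf.le]
        exact congrArg _ (funext hfg)
      have h2 : (⨅ i, ⟪g, v i⟫) ≤ ρ := by
        rw [hρ']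
        exact le_ciSup hbdd (⟨g, hgn⟩ : {f : H // ‖f‖ = 1})
      rw [h1, mul_comm ρ _]
      exact mul_le_mul_of_nonneg_left h2 hnf.le
  constructor
  · intro f
    rw [hL' f]
    have := key f
    nlinarith [sq_nonneg (‖f‖ - ρ), norm_nonneg f]
  · have hstar : (⨅ i, ⟪fstar, v i⟫) = ρ := by rw [← inf_simplex, hmax]
    rw [hL' (ρ • fstar)]
    have h1 : (⨅ i, ⟪ρ • fstar, v i⟫) = ρ * ρ := by
      have : ∀ i, ⟪ρ • fstar, v i⟫ = ρ * ⟪fstar, v i⟫ := fun i => real_inner_smul_left _ _ _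
      rw [congrArg iInf (funext this), inf_mul_left _ hpos.le, hstar]
    rw [h1, norm_smul, hfs, Real.norm_eq_abs, abs_of_pos hpos]
    ring
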